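/- (Corollary 2(b), multiple equilibria, sufficient condition.) Under the multi-equilibrium learning setup, if min over σ ∈ S of (1/n)·∑_{i=1}^n erf(ε·√((ρ + ρ̄·k_i^σ)/2)) is ≥ 1 − ε̄·δ, then learning under all equilibria occurs: sup over σ ∈ S of P_σ({ω : (1/n)·|{i : ω ∉ A_i^σ}| ≥ ε̄}) ≤ δ. -/
import Mathlib


open MeasureTheory Filter
open scoped Classical ENNReal

/-- The error function `erf x = (2/√π) ∫₀ˣ e^{-t²} dt`. -/
noncomputable def erf (x : ℝ) : ℝ :=
  (2 / Real.sqrt Real.pi) * ∫ t in (0:ℝ)..x, Real.exp (-t ^ 2)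

lemma erf_nonneg_of_nonneg {x : ℝ} (hx : 0 ≤ x) : 0 ≤ erf x := by
  unfold erf
  apply mul_nonneg (by positivity)
  apply intervalIntegral.integral_nonneg hx
  intro t _; positivity

/-- Corollary 2(b): multiple equilibria, sufficient condition. If the minimum
over equilibria `σ ∈ S` of the average `erf` value is at least `1 - ε̄ δ`,
then learning under all equilibria occurs: the sup over `σ` of the probability
that at least a fraction `ε̄` of agents err is at most `δ`. -/
theorem stmt_6 (n : ℕ) (hn : 1 ≤ n) (ε εbar δ ρ ρbar : ℝ)
    (hε : 0 < ε) (hεbar : εbar ∈ Set.Ioo (0:ℝ) 1) (hδ : δ ∈ Set.Ioo (0:ℝ) 1)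
    (hρ : 0 < ρ) (hρbar : 0 < ρbar)
    (S : Type*) [Fintype S] [Nonempty S]
    (k : S → Fin n → ℕ) (hk : ∀ σ i, 1 ≤ k σ i)
    (Ω : S → Type*) [∀ σ, MeasurableSpace (Ω σ)]
    (P : ∀ σ, Measure (Ω σ)) [∀ σ, IsProbabilityMeasure (P σ)]
    (A : (σ : S) → Fin n → Set (Ω σ)) (hmA : ∀ σ i, MeasurableSet (A σ i))
    (hPA : ∀ σ i, P σ (A σ i)
        = ENNReal.ofReal (erf (ε * Real.sqrt ((ρ + ρbar * k σ i) / 2))))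
    (hcond : 1 - εbar * δ ≤ Finset.univ.inf' Finset.univ_nonempty
        (fun σ : S => (1 / n : ℝ) * ∑ i, erf (ε * Real.sqrt ((ρ + ρbar * k σ i) / 2)))) :
    (⨆ σ : S, P σ {ω | εbar ≤
        (1 / n : ℝ) * ((Finset.univ.filter fun i => ω ∉ A σ i).card : ℝ)})
      ≤ ENNReal.ofReal δ := by
  obtain ⟨hεb0, hεb1⟩ := hεbar
  obtain ⟨hδ0, hδ1⟩ := hδ
  have hn0 : (0:ℝ) < n := by exact_mod_cast Nat.lt_of_lt_of_le Nat.zero_lt_one hn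
  apply iSup_le
  intro σ
  set e : Fin n → ℝ := fun i => erf (ε * Real.sqrt ((ρ + ρbar * k σ i) / 2)) with he
  have he0 : ∀ i, 0 ≤ e i := by
    intro i
    apply erf_nonneg_of_nonneg
    positivity
  have he1 : ∀ i, e i ≤ 1 := by
    intro i
    have h := prob_le_one (μ := P σ) (s := A σ i)
    rw [hPA σ i] at h
    exact ENNReal.ofReal_le_one.mp h
  -- the counting function
  set F : Ω σ → ℝ≥0∞ := fun ω => ∑ i, ((A σ i)ᶜ).indicator (fun _ => (1:ℝ≥0∞)) ω with hF
  have hFmeas : Measurable F := by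
    apply Finset.measurable_sum
    intro i _
    exact Measurable.indicator measurable_const (hmA σ i).compl
  have hFcard : ∀ ω, F ω = ((Finset.univ.filter fun i => ω ∉ A σ i).card : ℝ≥0∞) := by
    intro ω
    rw [hF]
    rw [Finset.card_filter]
    push_cast
    apply Finset.sum_congr rfl
    intro i _
    by_cases h : ω ∈ A σ i
    · simp [Set.indicator_of_notMem, h]
    · simp [Set.indicator_of_mem, h]
  set c : ℝ≥0∞ := ENNReal.ofReal (εbar * n) with hc
  have hc0 : c ≠ 0 := by
    simp [hc, ENNReal.ofReal_eq_zero]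
    positivity
  have hctop : c ≠ ⊤ := ENNReal.ofReal_ne_top
  -- event inclusion
  have hsub : {ω | εbar ≤ (1 / n : ℝ) * ((Finset.univ.filter fun i => ω ∉ A σ i).card : ℝ)}
      ⊆ {ω | c ≤ F ω} := by
    intro ω hω
    simp only [Set.mem_setOf_eq] at hω ⊢
    rw [hFcard ω]
    have h1 : εbar * n ≤ ((Finset.univ.filter fun i => ω ∉ A σ i).card : ℝ) := by
      have := mul_le_mul_of_nonneg_right hω (le_of_lt hn0)
      calc εbar * n ≤ (1 / n : ℝ) * ((Finset.univ.filter fun i => ω ∉ A σ i).card : ℝ) * n := this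
        _ = ((Finset.univ.filter fun i => ω ∉ A σ i).card : ℝ) := by field_simp
    calc c ≤ ENNReal.ofReal ((Finset.univ.filter fun i => ω ∉ A σ i).card : ℝ) :=
          ENNReal.ofReal_le_ofReal h1
      _ = ((Finset.univ.filter fun i => ω ∉ A σ i).card : ℝ≥0∞) := by
          rw [ENNReal.ofReal_natCast]
  -- Markov
  have hmarkov : c * P σ {ω | εbar ≤ (1 / n : ℝ) *
      ((Finset.univ.filter fun i => ω ∉ A σ i).card : ℝ)} ≤ ∫⁻ ω, F ω ∂(P σ) := by
    calc c * P σ {ω | εbar ≤ (1 / n : ℝ) *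
          ((Finset.univ.filter fun i => ω ∉ A σ i).card : ℝ)}
        ≤ c * P σ {ω | c ≤ F ω} := by
          exact mul_le_mul_right (measure_mono hsub) c
      _ ≤ ∫⁻ ω, F ω ∂(P σ) := mul_meas_ge_le_lintegral₀ hFmeas.aemeasurable c
  have hint : ∫⁻ ω, F ω ∂(P σ) = ∑ i, P σ (A σ i)ᶜ := by
    rw [hF]
    rw [lintegral_finset_sum _ (fun i _ => Measurable.indicator measurable_const (hmA σ i).compl)]
    exact Finset.sum_congr rfl fun i _ => lintegral_indicator_one (hmA σ i).compl
  have hcompl : ∀ i, P σ (A σ i)ᶜ = ENNReal.ofReal (1 - e i) := by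
    intro i
    rw [prob_compl_eq_one_sub (hmA σ i), hPA σ i]
    rw [ENNReal.ofReal_sub _ (he0 i), ENNReal.ofReal_one]
  have hsum : ∑ i, P σ (A σ i)ᶜ = ENNReal.ofReal (∑ i, (1 - e i)) := by
    rw [ENNReal.ofReal_sum_of_nonneg (fun i _ => by linarith [he1 i])]
    exact Finset.sum_congr rfl fun i _ => hcompl i
  -- bound the sum using hcond
  have hinf : (1 / n : ℝ) * ∑ i, e i ≥ 1 - εbar * δ := by
    refine le_trans hcond ?_
    exact Finset.inf'_le _ (Finset.mem_univ σ)
  have hsumbound : ∑ i, (1 - e i) ≤ εbar * n * δ := by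
    rw [Finset.sum_sub_distrib]
    simp only [Finset.sum_const, Finset.card_univ, Fintype.card_fin, nsmul_eq_mul, mul_one]
    have : (n:ℝ) * (1 - εbar * δ) ≤ ∑ i, e i := by
      have := mul_le_mul_of_nonneg_left hinf (le_of_lt hn0)
      calc (n:ℝ) * (1 - εbar * δ) ≤ (n:ℝ) * ((1 / n : ℝ) * ∑ i, e i) := this
        _ = ∑ i, e i := by field_simp
    nlinarith
  have hfinal : c * P σ {ω | εbar ≤ (1 / n : ℝ) *
      ((Finset.univ.filter fun i => ω ∉ A σ i).card : ℝ)} ≤ c * ENNReal.ofReal δ := by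
    calc c * P σ {ω | εbar ≤ (1 / n : ℝ) *
          ((Finset.univ.filter fun i => ω ∉ A σ i).card : ℝ)}
        ≤ ENNReal.ofReal (∑ i, (1 - e i)) := by rw [← hsum, ← hint]; exact hmarkov
      _ ≤ ENNReal.ofReal (εbar * n * δ) := ENNReal.ofReal_le_ofReal hsumbound
      _ = c * ENNReal.ofReal δ := by
          rw [hc, ← ENNReal.ofReal_mul (by positivity)]
  exact (ENNReal.mul_le_mul_iff_right hc0 hctop).mp hfinal
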